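/- Let p be an odd prime and i ∈ F_p^×. The set C_{i,-(i+1)} of matrices in GL_2(F_p) with determinant i and trace -(i+1) satisfies: the sum over i ∈ F_p^× of #C_{i,-(i+1)}/#GL_2(F_p) equals (p^2-2)/((p-1)^2(p+1)). -/

import Mathlib

open Matrix Finset

variable {K : Type*} [Field K] [Fintype K] [DecidableEq K]

lemma card_pairs_mul (m : K) :
    Nat.card {x : K × K // x.1 * x.2 = m} =
      if m = 0 then 2 * Fintype.card K - 1 else Fintype.card K - 1 := by
  rw [Nat.card_eq_fintype_card, Fintype.card_subtype]
  split_ifs with hm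
  · subst hm
    have hsplit : (univ.filter fun x : K × K => x.1 * x.2 = 0) =
        (univ.filter fun x : K × K => x.1 = 0) ∪ (univ.filter fun x : K × K => x.2 = 0) := by
      ext x; simp [mul_eq_zero]
    have h1 : (univ.filter fun x : K × K => x.1 = 0).card = Fintype.card K := by
      rw [← Fintype.card_subtype]
      exact Fintype.card_congr ⟨fun x => x.1.2, fun b => ⟨(0, b), rfl⟩,
        fun x => Subtype.ext (Prod.ext x.2.symm rfl), fun b => rfl⟩
    have h2 : (univ.filter fun x : K × K => x.2 = 0).card = Fintype.card K := by
      rw [← Fintype.card_subtype]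
      exact Fintype.card_congr ⟨fun x => x.1.1, fun b => ⟨(b, 0), rfl⟩,
        fun x => Subtype.ext (Prod.ext rfl x.2.symm), fun b => rfl⟩
    have hint : ((univ.filter fun x : K × K => x.1 = 0) ∩
        (univ.filter fun x : K × K => x.2 = 0)).card = 1 := by
      have : ((univ.filter fun x : K × K => x.1 = 0) ∩
          (univ.filter fun x : K × K => x.2 = 0)) = {((0 : K), (0 : K))} := by
        ext x; simp [Prod.ext_iff]
      rw [this, Finset.card_singleton]
    have := Finset.card_union_add_card_inter (univ.filter fun x : K × K => x.1 = 0)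
      (univ.filter fun x : K × K => x.2 = 0)
    rw [hsplit]
    omega
  · rw [← Fintype.card_subtype, ← Fintype.card_units]
    refine Fintype.card_congr ⟨fun x => Units.mk0 x.1.1 ?_, fun u => ⟨(u, m * (u⁻¹ : Kˣ)), ?_⟩, ?_, ?_⟩
    · intro h0
      apply hm; rw [← x.2, h0, zero_mul]
    · field_simp; exact Units.mul_inv u
    · rintro ⟨⟨a, b⟩, h⟩
      ext : 1
      simp only [Units.val_mk0]
      congr 1
      have ha : a ≠ 0 := fun h0 => hm (by rw [← h, h0, zero_mul])
      field_simp
      rw [Units.val_inv_eq_inv_val, Units.val_mk0, ← h]; dsimp only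
      rw [mul_comm a b, mul_assoc, mul_inv_cancel₀ ha, mul_one]
    · intro u; ext; rfl

lemma card_matrices (i t : K) (hi : i ≠ 0) :
    Nat.card {A : Matrix (Fin 2) (Fin 2) K // A.det = i ∧ A.trace = t} =
      ∑ a : K, Nat.card {x : K × K // x.1 * x.2 = a * (t - a) - i} := by
  simp only [Nat.card_eq_fintype_card]
  rw [← Fintype.card_sigma]
  refine Fintype.card_congr ⟨fun A => ⟨A.1 0 0, ⟨(A.1 0 1, A.1 1 0), ?_⟩⟩,
    fun s => ⟨!![s.1, s.2.1.1; s.2.1.2, t - s.1], ?_, ?_⟩, ?_, ?_⟩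
  · obtain ⟨A, hd, ht⟩ := A
    rw [Matrix.det_fin_two] at hd
    rw [Matrix.trace_fin_two] at ht
    simp only
    have h11 : A 1 1 = t - A 0 0 := by linear_combination ht
    rw [h11] at hd
    linear_combination -hd
  · obtain ⟨a, ⟨⟨b, c⟩, h⟩⟩ := s
    rw [Matrix.det_fin_two_of]
    linear_combination -h
  · obtain ⟨a, ⟨⟨b, c⟩, h⟩⟩ := s
    rw [Matrix.trace_fin_two]
    simp
  · rintro ⟨A, hd, ht⟩
    ext i j
    rw [Matrix.trace_fin_two] at ht
    fin_cases i <;> fin_cases j <;> simp <;> first | linear_combination ht | linear_combination -ht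
  · rintro ⟨a, ⟨⟨b, c⟩, h⟩⟩
    rfl

lemma card_set_eq (i t : K) (hi : i ≠ 0) :
    Nat.card {γ : GL (Fin 2) K |
        Matrix.det (γ : Matrix (Fin 2) (Fin 2) K) = i ∧
        Matrix.trace (γ : Matrix (Fin 2) (Fin 2) K) = t} =
      Nat.card {A : Matrix (Fin 2) (Fin 2) K // A.det = i ∧ A.trace = t} := by
  refine Nat.card_congr ⟨fun γ => ⟨(γ.1 : Matrix (Fin 2) (Fin 2) K), γ.2⟩,
    fun A => ⟨Matrix.GeneralLinearGroup.mkOfDetNeZero A.1 (by rw [A.2.1]; exact hi), ?_⟩,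
    fun γ => Subtype.ext (Units.ext rfl), fun A => rfl⟩
  exact A.2

lemma key_count (i : K) (hi : i ≠ 0) :
    (Nat.card {γ : GL (Fin 2) K |
        Matrix.det (γ : Matrix (Fin 2) (Fin 2) K) = i ∧
        Matrix.trace (γ : Matrix (Fin 2) (Fin 2) K) = -(i + 1)} : ℚ) =
      (Fintype.card K : ℚ) * ((Fintype.card K : ℚ) - 1) +
        (if i = 1 then (Fintype.card K : ℚ) else 2 * (Fintype.card K : ℚ)) := by
  have hq : 1 ≤ Fintype.card K := Fintype.card_pos
  rw [card_set_eq i _ hi, card_matrices i _ hi]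
  have hroot : ∀ a : K, (a * (-(i + 1) - a) - i = 0) ↔ (a = -1 ∨ a = -i) := by
    intro a
    constructor
    · intro h
      have : (a + 1) * (a + i) = 0 := by linear_combination -h
      rcases mul_eq_zero.1 this with h | h
      · exact Or.inl (by linear_combination h)
      · exact Or.inr (by linear_combination h)
    · rintro (rfl | rfl) <;> ring
  classical
  simp only [card_pairs_mul, hroot, Nat.cast_ite]
  rw [Nat.cast_sum]
  simp only [Nat.cast_ite]
  rw [Finset.sum_ite]
  rw [Finset.sum_const, Finset.sum_const, nsmul_eq_mul, nsmul_eq_mul]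
  have hfilt : Finset.filter (fun a : K => a = -1 ∨ a = -i) Finset.univ = {-1, -i} := by
    ext a; simp
  have hnot : (Finset.filter (fun a : K => ¬(a = -1 ∨ a = -i)) Finset.univ).card =
      Fintype.card K - ({-1, -i} : Finset K).card := by
    rw [← hfilt, Finset.filter_not, Finset.card_sdiff_of_subset (Finset.filter_subset _ _),
      Finset.card_univ]
  rw [hfilt, hnot]
  by_cases h1 : i = 1
  · subst h1
    have : ({-1, -1} : Finset K).card = 1 := by simp
    rw [if_pos rfl, this]
    have h2q : (1:ℕ) ≤ 2 * Fintype.card K := by omega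
    push_cast [Nat.cast_sub h2q, Nat.cast_sub hq, Nat.cast_sub (by omega : 1 ≤ Fintype.card K)]
    ring
  · have hne : (-1 : K) ≠ -i := fun h => h1 (by linear_combination h)
    have hcard2 : ({-1, -i} : Finset K).card = 2 := Finset.card_pair hne
    have hq2 : 2 ≤ Fintype.card K := by
      simpa [hcard2] using Finset.card_le_univ ({-1, -i} : Finset K)
    rw [if_neg h1, hcard2]
    have h2q : (1:ℕ) ≤ 2 * Fintype.card K := by omega
    push_cast [Nat.cast_sub h2q, Nat.cast_sub (by omega : 1 ≤ Fintype.card K),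
      Nat.cast_sub hq2]
    ring

theorem sum_C_i_neg_isucc (p : ℕ) [Fact p.Prime] (hp : Odd p) :
    ∑ i : (ZMod p)ˣ,
      (Nat.card {γ : GL (Fin 2) (ZMod p) |
          Matrix.det (γ : Matrix (Fin 2) (Fin 2) (ZMod p)) = (i : ZMod p) ∧
          Matrix.trace (γ : Matrix (Fin 2) (Fin 2) (ZMod p)) = -((i : ZMod p) + 1)} : ℚ) /
        (Nat.card (GL (Fin 2) (ZMod p)) : ℚ) =
      ((p : ℚ)^2 - 2) / (((p : ℚ) - 1)^2 * ((p : ℚ) + 1)) := by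
  have hprime := (Fact.out : p.Prime)
  have hp3 : 3 ≤ p := by
    have h2 := hprime.two_le
    rcases hp with ⟨k, hk⟩
    omega
  have hq : Fintype.card (ZMod p) = p := ZMod.card p
  have hG : (Nat.card (GL (Fin 2) (ZMod p)) : ℚ) = ((p:ℚ)^2 - 1) * ((p:ℚ)^2 - p) := by
    rw [Matrix.card_GL_field, Fin.prod_univ_two, hq]
    simp only [Fin.val_zero, Fin.val_one, pow_zero, pow_one]
    have h1 : 1 ≤ p^2 := by nlinarith
    have h2 : p ≤ p^2 := by nlinarith
    push_cast [Nat.cast_sub h1, Nat.cast_sub h2]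
    ring
  rw [Finset.sum_congr rfl fun i _ => by
    rw [key_count (i : ZMod p) (Units.ne_zero i), hq]]
  rw [← Finset.sum_div, hG]
  have hsum : ∑ i : (ZMod p)ˣ,
      ((p:ℚ) * ((p:ℚ) - 1) + if (i : ZMod p) = 1 then (p:ℚ) else 2 * p) =
      ((p:ℚ) - 1) * ((p:ℚ) * ((p:ℚ) - 1) + 2 * p) - p := by
    have hcond : ∀ i : (ZMod p)ˣ, ((i : ZMod p) = 1) ↔ i = 1 := fun i => Units.val_eq_one
    simp only [hcond]
    rw [Finset.sum_add_distrib, Finset.sum_const, Finset.card_univ, Fintype.card_units, hq]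
    have : ∑ i : (ZMod p)ˣ, (if i = 1 then (p:ℚ) else 2 * p) =
        ∑ i : (ZMod p)ˣ, (2 * (p:ℚ) - if i = 1 then (p:ℚ) else 0) := by
      refine Finset.sum_congr rfl fun i _ => by split_ifs <;> ring
    rw [this, Finset.sum_sub_distrib, Finset.sum_const, Finset.card_univ, Fintype.card_units, hq,
      Finset.sum_ite_eq' Finset.univ (1 : (ZMod p)ˣ) (fun _ => (p:ℚ)), if_pos (Finset.mem_univ _)]
    have hp1 : 1 ≤ p := by omega
    simp only [nsmul_eq_mul, Nat.cast_sub hp1, Nat.cast_one]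
    ring
  rw [hsum]
  have hp3' : (3:ℚ) ≤ (p:ℚ) := by exact_mod_cast hp3
  have h0 : (p:ℚ) ≠ 0 := by intro h; rw [h] at hp3'; norm_num at hp3'
  have h1 : (p:ℚ) - 1 ≠ 0 := by intro h; nlinarith
  have h2 : (p:ℚ) + 1 ≠ 0 := by intro h; nlinarith
  rw [show ((p:ℚ)^2 - 1) * ((p:ℚ)^2 - (p:ℚ)) = ((p:ℚ)-1)^2 * ((p:ℚ)+1) * (p:ℚ) from by ring]
  rw [div_eq_div_iff (mul_ne_zero (mul_ne_zero (pow_ne_zero 2 h1) h2) h0) (mul_ne_zero (pow_ne_zero 2 h1) h2)]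
  ring
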